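/- (Relative minimax characterization.) Let W be a nonempty compact set of channels, p_X an input pmf, α : W → ℝ a bounded continuous function, and define Δ_α E_{r,F}(R, p_X, W) = inf_{p∈W} [E_{r,F}(R, p_X, p) − α(p)] and Δ_α E_sp(R, p_X, W) = inf_{p∈W} [E_sp(R, p_X, p) − α(p)]. Then for every continuous nondecreasing F : ℝ → ℝ, one has Δ_α E_{r,F}(R, p_X, W) ≥ 0 if and only if F(t) ≥ F^{L*}(t) := −Δ_α E_sp(R+t, p_X, W) for every t ∈ ℝ; hence F^{L*} is the pointwise-minimal feasible penalty function for the relative minimax problem and maximizes the relative erasure exponent over all feasible continuous increasing penalty functions. -/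
import Mathlib


open scoped BigOperators

section Defs

variable {𝒳 𝒴 : Type*} [Fintype 𝒳] [Fintype 𝒴]

/-- `p` is a probability mass function on the finite alphabet `𝒳`. -/
def IsPMF (p : 𝒳 → ℝ) : Prop := (∀ x, 0 ≤ p x) ∧ ∑ x, p x = 1

/-- A channel assigns to each input letter a pmf on `𝒴`. -/
def IsChannel (W : 𝒳 → 𝒴 → ℝ) : Prop := ∀ x, IsPMF (W x)

/-- Conditional Kullback–Leibler divergence `D(q ‖ W | pX)`, base-2 logarithms. -/
noncomputable def condKL (pX : 𝒳 → ℝ) (q W : 𝒳 → 𝒴 → ℝ) : ℝ :=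
  ∑ x, ∑ y, pX x * q x y * Real.logb 2 (q x y / W x y)

/-- Mutual information `I(pX, q)` of the joint pmf `(x, y) ↦ pX x * q x y`. -/
noncomputable def mutInfo (pX : 𝒳 → ℝ) (q : 𝒳 → 𝒴 → ℝ) : ℝ :=
  ∑ x, ∑ y, pX x * q x y * Real.logb 2 (q x y / ∑ x', pX x' * q x' y)

/-- Modified random-coding exponent `E_{r,F}(R, pX, W)`. -/
noncomputable def ErF (F : ℝ → ℝ) (R : ℝ) (pX : 𝒳 → ℝ) (W : 𝒳 → 𝒴 → ℝ) : ℝ :=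
  sInf {v : ℝ | ∃ q : 𝒳 → 𝒴 → ℝ, IsChannel q ∧ v = condKL pX q W + F (mutInfo pX q - R)}

/-- Sphere-packing exponent `E_sp(R, pX, W)`, with value `+∞` if no conditional pmf
satisfies the mutual-information constraint. -/
noncomputable def EspE (R : ℝ) (pX : 𝒳 → ℝ) (W : 𝒳 → 𝒴 → ℝ) : EReal :=
  sInf {v : EReal | ∃ q : 𝒳 → 𝒴 → ℝ,
    IsChannel q ∧ mutInfo pX q ≤ R ∧ v = (condKL pX q W : EReal)}

/-- `E_{r,F}` for a class of channels (infimum over the class). -/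
noncomputable def ErFW (F : ℝ → ℝ) (R : ℝ) (pX : 𝒳 → ℝ) (𝒲 : Set (𝒳 → 𝒴 → ℝ)) : ℝ :=
  sInf {v : ℝ | ∃ p ∈ 𝒲, v = ErF F R pX p}

/-- `E_sp` for a class of channels (infimum over the class). -/
noncomputable def EspEW (R : ℝ) (pX : 𝒳 → ℝ) (𝒲 : Set (𝒳 → 𝒴 → ℝ)) : EReal :=
  sInf {v : EReal | ∃ p ∈ 𝒲, v = EspE R pX p}

end Defs

section Helpers

variable {𝒳 𝒴 : Type*} [Fintype 𝒳] [Fintype 𝒴]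

private lemma hlog2 : (0:ℝ) < Real.log 2 := Real.log_pos one_lt_two

private lemma sub_one_le_mul_log {t : ℝ} (ht : 0 ≤ t) : t - 1 ≤ t * Real.log t := by
  rcases eq_or_lt_of_le ht with h | h
  · simp [← h]
  · have h1 : Real.log t⁻¹ ≤ t⁻¹ - 1 := Real.log_le_sub_one_of_pos (by positivity)
    rw [Real.log_inv] at h1
    have h2 := mul_le_mul_of_nonneg_left h1 h.le
    have h3 : t * t⁻¹ = 1 := mul_inv_cancel₀ h.ne'
    nlinarith

private lemma term_lb {a b w : ℝ} (ha0 : 0 ≤ a) (ha1 : a ≤ 1) (hb0 : 0 ≤ b)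
    (hw0 : 0 ≤ w) (hw1 : w ≤ 1) :
    -(1 / Real.log 2) ≤ a * b * Real.logb 2 (b / w) := by
  have hl2 := hlog2
  have hneg : -(1 / Real.log 2) ≤ 0 := neg_nonpos.2 (by positivity)
  rcases eq_or_lt_of_le hb0 with hb | hb
  · rw [← hb, mul_zero, zero_mul]; exact hneg
  rcases eq_or_lt_of_le hw0 with hw | hw
  · rw [← hw, div_zero, Real.logb_zero, mul_zero]; exact hneg
  have hbw : b ≤ b / w := by
    rw [le_div_iff₀ hw]; nlinarith
  have hlog : Real.log b ≤ Real.log (b / w) := Real.log_le_log hb hbw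
  have hkey : -1 ≤ a * (b * Real.log b) := by
    rcases le_or_gt 0 (b * Real.log b) with h | h
    · nlinarith
    · nlinarith [mul_nonneg (sub_nonneg.2 ha1) (neg_nonneg.2 h.le),
        sub_one_le_mul_log hb0]
  have h4 : -1 ≤ a * b * Real.log (b / w) := by
    have h5 : a * b * Real.log b ≤ a * b * Real.log (b / w) :=
      mul_le_mul_of_nonneg_left hlog (by positivity)
    nlinarith
  rw [← Real.log_div_log]
  have he : a * b * (Real.log (b / w) / Real.log 2)
      = (a * b * Real.log (b / w)) / Real.log 2 := by ring
  rw [he, show -(1 / Real.log 2) = (-1) / Real.log 2 by ring]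
  exact (div_le_div_iff_of_pos_right hl2).mpr h4

private lemma term_ub {a b m : ℝ} (ha0 : 0 ≤ a) (ha1 : a ≤ 1) (hb0 : 0 ≤ b)
    (hb1 : b ≤ 1) (hab : a * b ≤ m) :
    a * b * Real.logb 2 (b / m) ≤ 1 / Real.log 2 := by
  have hl2 := hlog2
  have hpos : (0:ℝ) ≤ 1 / Real.log 2 := by positivity
  rcases eq_or_lt_of_le ha0 with ha | ha
  · rw [← ha, zero_mul, zero_mul]; exact hpos
  rcases eq_or_lt_of_le hb0 with hb | hb
  · rw [← hb, mul_zero, zero_mul]; exact hpos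
  have hm : 0 < m := lt_of_lt_of_le (by positivity) hab
  have hr : b / m ≤ 1 / a := by
    rw [div_le_div_iff₀ hm ha]; nlinarith
  have hlog : Real.log (b / m) ≤ Real.log (1 / a) :=
    Real.log_le_log (by positivity) hr
  have hlog1 : Real.log (1 / a) = -Real.log a := by
    rw [one_div, Real.log_inv]
  have hla : Real.log a ≤ 0 := Real.log_nonpos ha0 ha1
  have h1 : a * b * Real.log (b / m) ≤ a * b * (-Real.log a) := by
    have := mul_le_mul_of_nonneg_left hlog (by positivity : (0:ℝ) ≤ a * b)
    rwa [hlog1] at this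
  have h2 : a * b * (-Real.log a) ≤ a * (-Real.log a) := by
    nlinarith [mul_nonneg (mul_nonneg ha0 (neg_nonneg.2 hla)) (sub_nonneg.2 hb1)]
  have h3 : a * (-Real.log a) ≤ 1 := by
    nlinarith [sub_one_le_mul_log ha0]
  have h4 : a * b * Real.log (b / m) ≤ 1 := by linarith
  rw [← Real.log_div_log]
  have he : a * b * (Real.log (b / m) / Real.log 2)
      = (a * b * Real.log (b / m)) / Real.log 2 := by ring
  rw [he, show (1:ℝ) / Real.log 2 = 1 / Real.log 2 from rfl]
  exact (div_le_div_iff_of_pos_right hl2).mpr h4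

private lemma pmf_le_one {p : 𝒳 → ℝ} (hp : IsPMF p) (x : 𝒳) : p x ≤ 1 := by
  have h := Finset.single_le_sum (f := p) (fun i _ => hp.1 i) (Finset.mem_univ x)
  rw [hp.2] at h; exact h

/-- The uniform constant bound. -/
noncomputable def Kc (𝒳 𝒴 : Type*) [Fintype 𝒳] [Fintype 𝒴] : ℝ :=
  (Fintype.card 𝒳 * Fintype.card 𝒴 : ℝ) / Real.log 2

private lemma Kc_nonneg : 0 ≤ Kc 𝒳 𝒴 := by unfold Kc; positivity

private lemma sum_sum_lb {f : 𝒳 → 𝒴 → ℝ} {c : ℝ} (h : ∀ x y, c ≤ f x y) :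
    (Fintype.card 𝒳 * Fintype.card 𝒴 : ℝ) * c ≤ ∑ x, ∑ y, f x y := by
  have h1 : ∑ x : 𝒳, ∑ y : 𝒴, c ≤ ∑ x, ∑ y, f x y :=
    Finset.sum_le_sum fun x _ => Finset.sum_le_sum fun y _ => h x y
  calc (Fintype.card 𝒳 * Fintype.card 𝒴 : ℝ) * c
      = ∑ _x : 𝒳, ∑ _y : 𝒴, c := by
        simp [Finset.sum_const, Finset.card_univ, nsmul_eq_mul]; ring
    _ ≤ _ := h1

private lemma sum_sum_ub {f : 𝒳 → 𝒴 → ℝ} {c : ℝ} (h : ∀ x y, f x y ≤ c) :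
    ∑ x, ∑ y, f x y ≤ (Fintype.card 𝒳 * Fintype.card 𝒴 : ℝ) * c := by
  have h1 : ∑ x, ∑ y, f x y ≤ ∑ _x : 𝒳, ∑ _y : 𝒴, c :=
    Finset.sum_le_sum fun x _ => Finset.sum_le_sum fun y _ => h x y
  calc ∑ x, ∑ y, f x y ≤ ∑ _x : 𝒳, ∑ _y : 𝒴, c := h1
    _ = (Fintype.card 𝒳 * Fintype.card 𝒴 : ℝ) * c := by
        simp [Finset.sum_const, Finset.card_univ, nsmul_eq_mul]; ring

private lemma condKL_lb {pX : 𝒳 → ℝ} {q W : 𝒳 → 𝒴 → ℝ}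
    (hpX : IsPMF pX) (hq : IsChannel q) (hW : IsChannel W) :
    -(Kc 𝒳 𝒴) ≤ condKL pX q W := by
  unfold condKL
  have h := sum_sum_lb (f := fun x y => pX x * q x y * Real.logb 2 (q x y / W x y))
    (c := -(1 / Real.log 2))
    (fun x y => term_lb (hpX.1 x) (pmf_le_one hpX x) ((hq x).1 y)
      ((hW x).1 y) (pmf_le_one (hW x) y))
  have he : -(Kc 𝒳 𝒴) = (Fintype.card 𝒳 * Fintype.card 𝒴 : ℝ) * (-(1/Real.log 2)) := by
    unfold Kc; ring
  rw [he]; exact h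

private lemma mutInfo_m_nonneg {pX : 𝒳 → ℝ} {q : 𝒳 → 𝒴 → ℝ}
    (hpX : IsPMF pX) (hq : IsChannel q) (y : 𝒴) :
    0 ≤ ∑ x', pX x' * q x' y :=
  Finset.sum_nonneg fun x' _ => mul_nonneg (hpX.1 x') ((hq x').1 y)

private lemma mutInfo_m_le_one {pX : 𝒳 → ℝ} {q : 𝒳 → 𝒴 → ℝ}
    (hpX : IsPMF pX) (hq : IsChannel q) (y : 𝒴) :
    ∑ x', pX x' * q x' y ≤ 1 := by
  have h1 : ∑ x', pX x' * q x' y ≤ ∑ x', pX x' :=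
    Finset.sum_le_sum fun x' _ => by
      nlinarith [hpX.1 x', pmf_le_one (hq x') y, (hq x').1 y]
  rw [hpX.2] at h1; exact h1

private lemma mutInfo_lb {pX : 𝒳 → ℝ} {q : 𝒳 → 𝒴 → ℝ}
    (hpX : IsPMF pX) (hq : IsChannel q) :
    -(Kc 𝒳 𝒴) ≤ mutInfo pX q := by
  unfold mutInfo
  have h := sum_sum_lb
    (f := fun x y => pX x * q x y * Real.logb 2 (q x y / ∑ x', pX x' * q x' y))
    (c := -(1 / Real.log 2))
    (fun x y => term_lb (hpX.1 x) (pmf_le_one hpX x) ((hq x).1 y)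
      (mutInfo_m_nonneg hpX hq y) (mutInfo_m_le_one hpX hq y))
  have he : -(Kc 𝒳 𝒴) = (Fintype.card 𝒳 * Fintype.card 𝒴 : ℝ) * (-(1/Real.log 2)) := by
    unfold Kc; ring
  rw [he]; exact h

private lemma mutInfo_ub {pX : 𝒳 → ℝ} {q : 𝒳 → 𝒴 → ℝ}
    (hpX : IsPMF pX) (hq : IsChannel q) :
    mutInfo pX q ≤ Kc 𝒳 𝒴 := by
  unfold mutInfo
  have h := sum_sum_ub
    (f := fun x y => pX x * q x y * Real.logb 2 (q x y / ∑ x', pX x' * q x' y))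
    (c := 1 / Real.log 2)
    (fun x y => term_ub (hpX.1 x) (pmf_le_one hpX x) ((hq x).1 y)
      (pmf_le_one (hq x) y)
      (Finset.single_le_sum (f := fun x' => pX x' * q x' y)
        (fun x' _ => mul_nonneg (hpX.1 x') ((hq x').1 y)) (Finset.mem_univ x)))
  have he : Kc 𝒳 𝒴 = (Fintype.card 𝒳 * Fintype.card 𝒴 : ℝ) * (1/Real.log 2) := by
    unfold Kc; ring
  rw [he]; exact h

private lemma condKL_self {pX : 𝒳 → ℝ} {p : 𝒳 → 𝒴 → ℝ} :
    condKL pX p p = 0 := by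
  unfold condKL
  refine Finset.sum_eq_zero fun x _ => Finset.sum_eq_zero fun y _ => ?_
  rcases eq_or_ne (p x y) 0 with h | h
  · rw [h]; ring
  · rw [div_self h, Real.logb_one, mul_zero]

end Helpers

section Core

private lemma core_iff {𝒳 𝒴 : Type*} [Fintype 𝒳] [Fintype 𝒴]
    (pX : 𝒳 → ℝ) (hpX : IsPMF pX)
    (𝒲 : Set (𝒳 → 𝒴 → ℝ)) (h𝒲ne : 𝒲.Nonempty)
    (h𝒲ch : ∀ p ∈ 𝒲, IsChannel p)
    (α : (𝒳 → 𝒴 → ℝ) → ℝ) (C : ℝ) (hC : ∀ p ∈ 𝒲, |α p| ≤ C)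
    (R : ℝ) (F : ℝ → ℝ) (hF : Monotone F) :
    (0 ≤ sInf {v : ℝ | ∃ p ∈ 𝒲, v = ErF F R pX p - α p} ↔
      ∀ t : ℝ,
        -(sInf {v : EReal | ∃ p ∈ 𝒲, v = EspE (R + t) pX p - (α p : EReal)})
          ≤ (F t : EReal)) := by
  have hK := Kc_nonneg (𝒳 := 𝒳) (𝒴 := 𝒴)
  set K : ℝ := Kc 𝒳 𝒴 with hKdef
  have hSne : ∀ p ∈ 𝒲, Set.Nonempty
      {v : ℝ | ∃ q, IsChannel q ∧ v = condKL pX q p + F (mutInfo pX q - R)} :=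
    fun p hp => ⟨_, p, h𝒲ch p hp, rfl⟩
  have hSlb : ∀ p ∈ 𝒲, ∀ v ∈
      {v : ℝ | ∃ q, IsChannel q ∧ v = condKL pX q p + F (mutInfo pX q - R)},
      -K + F (-K - R) ≤ v := by
    rintro p hp v ⟨q, hq, rfl⟩
    have h1 := condKL_lb hpX hq (h𝒲ch p hp)
    have h2 : F (-K - R) ≤ F (mutInfo pX q - R) := hF (by linarith [mutInfo_lb hpX hq])
    linarith
  have hErF_lb : ∀ p ∈ 𝒲, -K + F (-K - R) ≤ ErF F R pX p :=
    fun p hp => le_csInf (hSne p hp) (hSlb p hp)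
  have hErF_le : ∀ p ∈ 𝒲, ∀ q, IsChannel q →
      ErF F R pX p ≤ condKL pX q p + F (mutInfo pX q - R) :=
    fun p hp q hq => csInf_le ⟨_, hSlb p hp⟩ ⟨q, hq, rfl⟩
  have hAne : Set.Nonempty {v : ℝ | ∃ p ∈ 𝒲, v = ErF F R pX p - α p} := by
    obtain ⟨p0, hp0⟩ := h𝒲ne; exact ⟨_, p0, hp0, rfl⟩
  have hAlb : ∀ v ∈ {v : ℝ | ∃ p ∈ 𝒲, v = ErF F R pX p - α p},
      -K + F (-K - R) - C ≤ v := by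
    rintro v ⟨p, hp, rfl⟩
    have h1 := hErF_lb p hp
    have h2 := abs_le.mp (hC p hp)
    linarith [h2.2]
  constructor
  · intro h t
    rw [EReal.neg_le]
    refine le_sInf ?_
    rintro v ⟨p, hp, rfl⟩
    have h1 : α p ≤ ErF F R pX p := by
      have h2 : sInf {v : ℝ | ∃ p ∈ 𝒲, v = ErF F R pX p - α p} ≤ ErF F R pX p - α p :=
        csInf_le ⟨_, hAlb⟩ ⟨p, hp, rfl⟩
      linarith
    have h2 : ((α p - F t : ℝ) : EReal) ≤ EspE (R + t) pX p := by
      refine le_sInf ?_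
      rintro w ⟨q, hq, hmut, rfl⟩
      rw [EReal.coe_le_coe_iff]
      have h3 := hErF_le p hp q hq
      have h4 : F (mutInfo pX q - R) ≤ F t := hF (by linarith)
      linarith
    calc -(F t : EReal) = ((α p - F t : ℝ) : EReal) - ((α p : ℝ) : EReal) := by
          rw [← EReal.coe_sub, ← EReal.coe_neg]
          exact EReal.coe_eq_coe_iff.mpr (by ring)
      _ ≤ EspE (R + t) pX p - (α p : EReal) := EReal.sub_le_sub h2 le_rfl
  · intro h
    refine le_csInf hAne ?_
    rintro v ⟨p, hp, rfl⟩
    rw [sub_nonneg]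
    refine le_csInf (hSne p hp) ?_
    rintro w ⟨q, hq, rfl⟩
    set t := mutInfo pX q - R with ht
    have h3 := h t
    rw [EReal.neg_le] at h3
    have h1 : EspE (R + t) pX p ≤ ((condKL pX q p : ℝ) : EReal) :=
      sInf_le ⟨q, hq, le_of_eq (by rw [ht]; ring), rfl⟩
    have h2 : sInf {v : EReal | ∃ p ∈ 𝒲, v = EspE (R + t) pX p - (α p : EReal)}
        ≤ EspE (R + t) pX p - (α p : EReal) := sInf_le ⟨p, hp, rfl⟩
    have h4 : EspE (R + t) pX p - (α p : EReal)
        ≤ ((condKL pX q p - α p : ℝ) : EReal) := by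
      rw [EReal.coe_sub]; exact EReal.sub_le_sub h1 le_rfl
    have h5 : ((-(F t) : ℝ) : EReal) ≤ ((condKL pX q p - α p : ℝ) : EReal) := by
      rw [EReal.coe_neg]; exact (h3.trans h2).trans h4
    have h6 := EReal.coe_le_coe_iff.mp h5
    linarith
end Core


/-- relative minimax characterization: For bounded continuous
`α : 𝒲 → ℝ`, a continuous nondecreasing `F` satisfies `Δ_α E_{r,F}(R,pX,𝒲) ≥ 0`
iff `F(t) ≥ F^{L*}(t) := -Δ_α E_sp(R+t,pX,𝒲)` for all `t`; hence any real-valued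
realization `F*` of `F^{L*}` is the pointwise-minimal feasible penalty function and
maximizes the relative erasure exponent (for any reference `β`) over all feasible
continuous increasing penalty functions. -/
theorem relative_minimax_characterization {𝒳 𝒴 : Type*} [Fintype 𝒳] [Fintype 𝒴]
    (pX : 𝒳 → ℝ) (hpX : IsPMF pX)
    (𝒲 : Set (𝒳 → 𝒴 → ℝ)) (h𝒲ne : 𝒲.Nonempty) (h𝒲cpt : IsCompact 𝒲)
    (h𝒲ch : ∀ p ∈ 𝒲, IsChannel p)
    (α : (𝒳 → 𝒴 → ℝ) → ℝ) (hαcont : ContinuousOn α 𝒲)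
    (hαbdd : ∃ C : ℝ, ∀ p ∈ 𝒲, |α p| ≤ C)
    (R : ℝ) :
    (∀ F : ℝ → ℝ, Continuous F → Monotone F →
      (0 ≤ sInf {v : ℝ | ∃ p ∈ 𝒲, v = ErF F R pX p - α p} ↔
        ∀ t : ℝ,
          -(sInf {v : EReal | ∃ p ∈ 𝒲, v = EspE (R + t) pX p - (α p : EReal)})
            ≤ (F t : EReal)))
    ∧
    (∀ Fstar : ℝ → ℝ, Continuous Fstar → StrictMono Fstar → Function.Bijective Fstar →
      (∀ t : ℝ, (Fstar t : EReal)
          = -(sInf {v : EReal | ∃ p ∈ 𝒲, v = EspE (R + t) pX p - (α p : EReal)})) →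
      (0 ≤ sInf {v : ℝ | ∃ p ∈ 𝒲, v = ErF Fstar R pX p - α p})
      ∧ ∀ β : (𝒳 → 𝒴 → ℝ) → ℝ,
        ∀ F : ℝ → ℝ, Continuous F → StrictMono F → Function.Bijective F →
          0 ≤ sInf {v : ℝ | ∃ p ∈ 𝒲, v = ErF F R pX p - α p} →
          sInf {v : ℝ | ∃ p ∈ 𝒲,
              v = ErF (fun u : ℝ => max 0 (Function.invFun F u)) R pX p - β p}
            ≤ sInf {v : ℝ | ∃ p ∈ 𝒲,
              v = ErF (fun u : ℝ => max 0 (Function.invFun Fstar u)) R pX p - β p}) := by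
  obtain ⟨C, hC⟩ := hαbdd
  refine ⟨fun F _ hFm => core_iff pX hpX 𝒲 h𝒲ne h𝒲ch α C hC R F hFm, ?_⟩
  intro Fstar _ hFsm hFsb hFs
  have h0 : 0 ≤ sInf {v : ℝ | ∃ p ∈ 𝒲, v = ErF Fstar R pX p - α p} :=
    (core_iff pX hpX 𝒲 h𝒲ne h𝒲ch α C hC R Fstar hFsm.monotone).mpr
      (fun t => le_of_eq (hFs t).symm)
  refine ⟨h0, ?_⟩
  intro β F _ hFm hFb hFfeas
  have hK := Kc_nonneg (𝒳 := 𝒳) (𝒴 := 𝒴)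
  set K : ℝ := Kc 𝒳 𝒴 with hKdef
  have hpt : ∀ t, Fstar t ≤ F t := by
    intro t
    have h1 := (core_iff pX hpX 𝒲 h𝒲ne h𝒲ch α C hC R F hFm.monotone).mp hFfeas t
    rw [← hFs t] at h1
    exact_mod_cast h1
  have hFinv : Function.RightInverse (Function.invFun F) F :=
    Function.rightInverse_invFun hFb.2
  have hFsinv : Function.RightInverse (Function.invFun Fstar) Fstar :=
    Function.rightInverse_invFun hFsb.2
  have hinvle : ∀ u, Function.invFun F u ≤ Function.invFun Fstar u := by
    intro u
    have h1 : Fstar (Function.invFun F u) ≤ Fstar (Function.invFun Fstar u) := by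
      rw [hFsinv u]
      calc Fstar (Function.invFun F u) ≤ F (Function.invFun F u) := hpt _
        _ = u := hFinv u
    exact hFsm.le_iff_le.mp h1
  have hinvmono : Monotone (Function.invFun Fstar) := by
    intro u v huv
    apply hFsm.le_iff_le.mp
    rw [hFsinv u, hFsinv v]; exact huv
  set GF : ℝ → ℝ := fun u : ℝ => max 0 (Function.invFun F u) with hGFdef
  set GS : ℝ → ℝ := fun u : ℝ => max 0 (Function.invFun Fstar u) with hGSdef
  have hGle : ∀ u, GF u ≤ GS u := fun u => max_le_max le_rfl (hinvle u)
  have hGSmono : Monotone GS := fun u v huv => max_le_max le_rfl (hinvmono huv)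
  have hGF0 : ∀ u, (0:ℝ) ≤ GF u := fun u => le_max_left _ _
  have hGS0 : ∀ u, (0:ℝ) ≤ GS u := fun u => le_max_left _ _
  have hSlbF : ∀ p ∈ 𝒲, ∀ v ∈
      {v : ℝ | ∃ q, IsChannel q ∧ v = condKL pX q p + GF (mutInfo pX q - R)},
      -K ≤ v := by
    rintro p hp v ⟨q, hq, rfl⟩
    have h1 := condKL_lb hpX hq (h𝒲ch p hp)
    linarith [hGF0 (mutInfo pX q - R)]
  have hSlbS : ∀ p ∈ 𝒲, ∀ v ∈
      {v : ℝ | ∃ q, IsChannel q ∧ v = condKL pX q p + GS (mutInfo pX q - R)},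
      -K ≤ v := by
    rintro p hp v ⟨q, hq, rfl⟩
    have h1 := condKL_lb hpX hq (h𝒲ch p hp)
    linarith [hGS0 (mutInfo pX q - R)]
  have hED : ∀ p ∈ 𝒲, ErF GF R pX p ≤ ErF GS R pX p := by
    intro p hp
    refine le_csInf ⟨_, p, h𝒲ch p hp, rfl⟩ ?_
    rintro b ⟨q, hq, rfl⟩
    calc ErF GF R pX p ≤ condKL pX q p + GF (mutInfo pX q - R) :=
          csInf_le ⟨-K, hSlbF p hp⟩ ⟨q, hq, rfl⟩
      _ ≤ condKL pX q p + GS (mutInfo pX q - R) := by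
          linarith [hGle (mutInfo pX q - R)]
  have hlbF : ∀ p ∈ 𝒲, -K ≤ ErF GF R pX p :=
    fun p hp => le_csInf ⟨_, p, h𝒲ch p hp, rfl⟩ (hSlbF p hp)
  have hubS : ∀ p ∈ 𝒲, ErF GS R pX p ≤ GS (K - R) := by
    intro p hp
    have h1 : ErF GS R pX p ≤ condKL pX p p + GS (mutInfo pX p - R) :=
      csInf_le ⟨-K, hSlbS p hp⟩ ⟨p, h𝒲ch p hp, rfl⟩
    rw [condKL_self] at h1
    calc ErF GS R pX p ≤ 0 + GS (mutInfo pX p - R) := h1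
      _ = GS (mutInfo pX p - R) := by ring
      _ ≤ GS (K - R) := hGSmono (by linarith [mutInfo_ub hpX (h𝒲ch p hp)])
  by_cases hA : BddBelow {v : ℝ | ∃ p ∈ 𝒲, v = ErF GF R pX p - β p}
  · obtain ⟨p0, hp0⟩ := h𝒲ne
    refine le_csInf ⟨_, p0, hp0, rfl⟩ ?_
    rintro b ⟨p, hp, rfl⟩
    calc sInf {v : ℝ | ∃ p ∈ 𝒲, v = ErF GF R pX p - β p}
        ≤ ErF GF R pX p - β p := csInf_le hA ⟨p, hp, rfl⟩
      _ ≤ ErF GS R pX p - β p := by linarith [hED p hp]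
  · have hB : ¬ BddBelow {v : ℝ | ∃ p ∈ 𝒲, v = ErF GS R pX p - β p} := by
      rintro ⟨b0, hb0⟩
      refine hA ⟨-K - GS (K - R) + b0, ?_⟩
      rintro v ⟨p, hp, rfl⟩
      have h1 : b0 ≤ ErF GS R pX p - β p := hb0 ⟨p, hp, rfl⟩
      have h2 := hubS p hp
      have h3 := hlbF p hp
      linarith
    rw [Real.sInf_of_not_bddBelow hA, Real.sInf_of_not_bddBelow hB]
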